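/- For every ℓ > 0 there exist ternary relations Π⁽ʲ⁾ (1 ≤ j ≤ ℓ) on forms × forms × configurations such that for all forms φ, χ and molecules σ, α: φ * σ is the j-th component of the ℓ-tuple χ * α if and only if Π⁽ʲ⁾(φ, χ, conf(σ,α)) holds. -/

import Mathlib

open scoped Classical

/-- An abstract model of hereditarily finite sets over a set `A` of atoms,
together with the extension of permutations of atoms to all objects. -/
structure HFModel (A : Type) : Type 1 where
  Obj : Type
  atom : A → Obj
  mkSet : Finset Obj → Obj
  members : Obj → Finset Obj
  act : Equiv.Perm A → Obj → Obj
  atom_injective : Function.Injective atom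
  atom_ne_mkSet : ∀ a s, atom a ≠ mkSet s
  members_mkSet : ∀ s, members (mkSet s) = s
  members_atom : ∀ a, members (atom a) = ∅
  atom_or_set : ∀ x, (∃ a, x = atom a) ∨ (∃ s, x = mkSet s)
  act_atom : ∀ π a, act π (atom a) = atom (π a)
  act_mkSet : ∀ π s, act π (mkSet s) = mkSet (s.image (act π))
  act_one : ∀ x, act 1 x = x
  act_mul : ∀ π ρ x, act (π * ρ) x = act π (act ρ x)

/-- Abstract 2-configurations for `k`-molecules with colours in `κ`. -/
structure Config2 (k : ℕ) (κ : Type) : Type where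
  rel : Fin k → Fin k → Bool
  col₁ : Fin k → κ
  col₂ : Fin k → κ

/-- The configuration of a pair of `k`-molecules. -/
def conf {A κ : Type} [DecidableEq A] {k : ℕ} (col : A → κ) (τ σ : Fin k → A) :
    Config2 k κ :=
  ⟨fun p q => decide (τ p = σ q), col ∘ τ, col ∘ σ⟩

/-- `k`-forms. -/
inductive Form (k : ℕ) (κ : Type) : Type where
  | atom : Fin k → Form k κ
  | set : List (Form k κ × Config2 k κ) → Form k κ

/-- Evaluation `φ * σ` of a `k`-form on a `k`-molecule. -/
noncomputable def evalForm {A κ : Type} [DecidableEq A] [Fintype A] {k : ℕ}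
    (M : HFModel A) (col : A → κ) : (Fin k → A) → Form k κ → M.Obj
  | σ, .atom p => M.atom (σ p)
  | σ, .set l =>
      M.mkSet <| (l.attach.map (fun x =>
        (Finset.univ.filter
            (fun τ : Fin k → A => Function.Injective τ ∧ conf col τ σ = x.1.2)).image
          (fun τ => evalForm M col τ x.1.1))).foldr (· ∪ ·) ∅
  termination_by σ φ => sizeOf φ
  decreasing_by
    obtain ⟨⟨φ', E'⟩, hmem⟩ := x
    have h := List.sizeOf_lt_of_mem hmem
    simp at h ⊢
    omega

/-- The orbit `G x` of an object under a finite set of permutations, as an object. -/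
noncomputable def orbitObj {A : Type} (M : HFModel A) (G : Finset (Equiv.Perm A))
    (x : M.Obj) : M.Obj :=
  M.mkSet (G.image (fun g => M.act g x))

/-- The object `⋃_{h ∈ H} φ * (h ∘ σ)`. -/
noncomputable def unionEval {A κ : Type} [DecidableEq A] [Fintype A] {k : ℕ}
    (M : HFModel A) (col : A → κ) (H : Finset (Equiv.Perm A)) (φ : Form k κ)
    (σ : Fin k → A) : M.Obj :=
  M.mkSet (H.biUnion (fun h => M.members (evalForm M col (⇑h ∘ σ) φ)))

/-- The orbit-form evaluation `(φ,G,H) * σ = G(⋃_{h∈H} φ * hσ)`. -/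
noncomputable def orbitEval {A κ : Type} [DecidableEq A] [Fintype A] {k : ℕ}
    (M : HFModel A) (col : A → κ) (φ : Form k κ) (G H : Finset (Equiv.Perm A))
    (σ : Fin k → A) : M.Obj :=
  orbitObj M G (unionEval M col H φ σ)

/-- A finite set of permutations forming a subgroup. -/
def IsSubgroupF {A : Type} (G : Finset (Equiv.Perm A)) : Prop :=
  (1 : Equiv.Perm A) ∈ G ∧ (∀ g ∈ G, g⁻¹ ∈ G) ∧ ∀ g ∈ G, ∀ h ∈ G, g * h ∈ G

/-- Colour-preserving permutations (automorphisms). -/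
def IsAut {A κ : Type} (col : A → κ) (π : Equiv.Perm A) : Prop :=
  ∀ a, col (π a) = col a

/-- `X` is a support of object `x`. -/
def SupportsObj {A κ : Type} (M : HFModel A) (col : A → κ) (X : Set A) (x : M.Obj) : Prop :=
  ∀ π : Equiv.Perm A, IsAut col π → (∀ a ∈ X, π a = a) → M.act π x = x

/-- Transitive-closure membership. -/
inductive InTC {A : Type} (M : HFModel A) : M.Obj → M.Obj → Prop where
  | mem {x y} : x ∈ M.members y → InTC M x y
  | trans {x z y} : x ∈ M.members z → InTC M z y → InTC M x y

/-- `y` is a transitive set. -/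
def TransitiveObj {A : Type} (M : HFModel A) (y : M.Obj) : Prop :=
  ∀ z ∈ M.members y, ∀ w ∈ M.members z, w ∈ M.members y

/-- `x` is `k`-skew-symmetric. -/
def SkewSym {A κ : Type} (M : HFModel A) (col : A → κ) (k : ℕ) (x : M.Obj) : Prop :=
  ∃ (G : Finset (Equiv.Perm A)) (y : M.Obj), IsSubgroupF G ∧ x = orbitObj M G y ∧
    TransitiveObj M y ∧
    ∀ z, (z = y ∨ InTC M z y) →
      ∃ X : Finset A, X.card ≤ k ∧ SupportsObj M col X (orbitObj M G z)

/-- Kuratowski pair `(x,y) = {{x},{x,y}}`. -/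
noncomputable def kpair {A : Type} (M : HFModel A) (x y : M.Obj) : M.Obj :=
  M.mkSet {M.mkSet {x}, M.mkSet {x, y}}

/-- `ℓ`-tuples represented via iterated Kuratowski pairing. -/
noncomputable def tupleObj {A : Type} (M : HFModel A) :
    (ℓ : ℕ) → (Fin ℓ → M.Obj) → M.Obj
  | 0, _ => M.mkSet ∅
  | 1, f => f 0
  | (n + 2), f => kpair M (f 0) (tupleObj M (n + 1) (fun i => f i.succ))

namespace CompRel

variable {κ : Type} {k : ℕ}

/-- Richness: at least `3k` atoms of every colour. -/
def Rich (k : ℕ) {A : Type} (col : A → κ) : Prop :=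
  ∀ c : κ, ∃ f : Fin (3 * k) → A, Function.Injective f ∧ ∀ i, col (f i) = c

lemma conf_eq_iff {A B : Type} [DecidableEq A] [DecidableEq B]
    (col : A → κ) (col' : B → κ) (τ σ : Fin k → A) (τ' σ' : Fin k → B) :
    conf col τ σ = conf col' τ' σ' ↔
      ((∀ p q, τ p = σ q ↔ τ' p = σ' q) ∧ (∀ p, col (τ p) = col' (τ' p)) ∧
        (∀ p, col (σ p) = col' (σ' p))) := by
  simp only [conf, Config2.mk.injEq, funext_iff, Function.comp_apply, decide_eq_decide]

lemma conf_flip {A B : Type} [DecidableEq A] [DecidableEq B]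
    {col : A → κ} {col' : B → κ} {τ σ : Fin k → A} {τ' σ' : Fin k → B}
    (h : conf col τ σ = conf col' τ' σ') : conf col σ τ = conf col' σ' τ' := by
  rw [conf_eq_iff] at h ⊢
  exact ⟨fun p q => by rw [eq_comm, h.1, eq_comm], h.2.2, h.2.1⟩

lemma conf_self {A B : Type} [DecidableEq A] [DecidableEq B]
    {col : A → κ} {col' : B → κ} {σ : Fin k → A} {σ' : Fin k → B}
    (hσ : Function.Injective σ) (hσ' : Function.Injective σ')
    (hc : ∀ p, col (σ p) = col' (σ' p)) : conf col σ σ = conf col' σ' σ' := by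
  rw [conf_eq_iff]
  refine ⟨fun p q => ?_, hc, hc⟩
  constructor
  · intro h; rw [hσ h]
  · intro h; rw [hσ' h]

/-- Choose fresh atoms of prescribed colours outside a small set. -/
lemma exists_fresh {A : Type} [DecidableEq A] (col : A → κ) (rich : Rich k col)
    (d : Fin k → κ) (S : Finset A) (hS : S.card ≤ 2 * k) :
    ∃ h : Fin k → A, Function.Injective h ∧ (∀ i, col (h i) = d i) ∧ ∀ i, h i ∉ S := by
  classical
  -- for each colour get an injection `Fin k` into fresh atoms of that colour
  have key : ∀ c : κ, ∃ g : Fin k → A, Function.Injective g ∧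
      (∀ i, col (g i) = c) ∧ ∀ i, g i ∉ S := by
    intro c
    obtain ⟨f, hfinj, hfcol⟩ := rich c
    set T : Finset A := (Finset.univ.image f) \ S with hT
    have hcard : k ≤ T.card := by
      have h1 : (Finset.univ.image f).card = 3 * k := by
        rw [Finset.card_image_of_injective _ hfinj, Finset.card_univ, Fintype.card_fin]
      have h2 : (Finset.univ.image f).card - S.card ≤ T.card :=
        Finset.le_card_sdiff S (Finset.univ.image f)
      omega
    obtain ⟨U, hUsub, hUcard⟩ := Finset.exists_subset_card_eq hcard
    let e := U.equivFin
    refine ⟨fun i => (e.symm (Fin.cast hUcard.symm i)).1, ?_, ?_, ?_⟩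
    · intro i j hij
      have := e.symm.injective (Subtype.ext hij)
      simpa [Fin.ext_iff] using congrArg Fin.val this
    · intro i
      have hmem : ((e.symm (Fin.cast hUcard.symm i)).1 : A) ∈ U := (e.symm _).2
      have hmemT := hUsub hmem
      rw [hT, Finset.mem_sdiff, Finset.mem_image] at hmemT
      obtain ⟨⟨j, _, hj⟩, _⟩ := hmemT
      show col ((e.symm (Fin.cast hUcard.symm i)).1) = c
      rw [← hj]
      exact hfcol j
    · intro i
      have hmem : ((e.symm (Fin.cast hUcard.symm i)).1 : A) ∈ U := (e.symm _).2
      have hmemT := hUsub hmem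
      rw [hT, Finset.mem_sdiff] at hmemT
      exact hmemT.2
  choose g hg using key
  -- rank of a position among positions of the same colour
  let rank : Fin k → ℕ := fun i => (Finset.univ.filter (fun j => d j = d i ∧ j < i)).card
  have hrank_lt : ∀ i, rank i < k := by
    intro i
    have : (Finset.univ.filter (fun j => d j = d i ∧ j < i)).card ≤
        (Finset.univ.filter (fun j : Fin k => j < i)).card := by
      apply Finset.card_le_card
      intro x hx
      simp only [Finset.mem_filter, Finset.mem_univ, true_and] at hx ⊢
      exact hx.2
    have h3 : (Finset.univ.filter (fun j => d j = d i ∧ j < i)) ⊆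
        Finset.univ.filter (fun j : Fin k => j ≠ i) := by
      intro x hx
      simp only [Finset.mem_filter, Finset.mem_univ, true_and] at hx ⊢
      exact ne_of_lt hx.2
    have h4 := Finset.card_le_card h3
    have h5 : (Finset.univ.filter (fun j : Fin k => j ≠ i)).card < k := by
      have heq := Finset.card_filter_add_card_filter_not
        (s := (Finset.univ : Finset (Fin k))) (p := fun j : Fin k => j ≠ i)
      have hione : (Finset.univ.filter (fun j : Fin k => ¬ j ≠ i)) = {i} := by
        ext x; simp [eq_comm]
      rw [hione, Finset.card_singleton] at heq
      simp only [Finset.card_univ, Fintype.card_fin] at heq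
      have hk : 0 < k := i.pos
      omega
    simp only [rank]
    omega
  have hrank_inj : ∀ i j : Fin k, d i = d j → rank i = rank j → i = j := by
    intro i j hd hr
    by_contra hne
    rcases lt_or_gt_of_ne (hne) with hlt | hlt
    all_goals {
      have hss : (Finset.univ.filter (fun m => d m = d i ∧ m < i)) ⊂
          (Finset.univ.filter (fun m => d m = d j ∧ m < j)) ∨
          (Finset.univ.filter (fun m => d m = d j ∧ m < j)) ⊂
          (Finset.univ.filter (fun m => d m = d i ∧ m < i)) := by
        first
        | (left; constructor
           · intro x hx
             simp only [Finset.mem_filter, Finset.mem_univ, true_and] at hx ⊢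
             exact ⟨hx.1.trans (by rw [hd]), hx.2.trans hlt⟩
           · intro hsub
             have : i ∈ (Finset.univ.filter (fun m => d m = d i ∧ m < i)) :=
               hsub (by simp [hd.symm, hlt])
             simp at this)
        | (right; constructor
           · intro x hx
             simp only [Finset.mem_filter, Finset.mem_univ, true_and] at hx ⊢
             exact ⟨hx.1.trans (by rw [hd]), hx.2.trans hlt⟩
           · intro hsub
             have : j ∈ (Finset.univ.filter (fun m => d m = d j ∧ m < j)) :=
               hsub (by simp [hd, hlt])
             simp at this)
      rcases hss with h | h
      · have := Finset.card_lt_card h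
        simp only [rank] at hr; omega
      · have := Finset.card_lt_card h
        simp only [rank] at hr; omega
    }
  refine ⟨fun i => g (d i) ⟨rank i, hrank_lt i⟩, ?_, fun i => (hg (d i)).2.1 _,
    fun i => (hg (d i)).2.2 _⟩
  intro i j hij
  have hij' : g (d i) ⟨rank i, hrank_lt i⟩ = g (d j) ⟨rank j, hrank_lt j⟩ := hij
  clear hij
  have hcol : d i = d j := by
    have h1 := (hg (d i)).2.1 (⟨rank i, hrank_lt i⟩ : Fin k)
    have h2 := (hg (d j)).2.1 (⟨rank j, hrank_lt j⟩ : Fin k)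
    rw [← h1, ← h2, hij']
  have heq2 : g (d i) ⟨rank i, hrank_lt i⟩ = g (d i) ⟨rank j, hrank_lt j⟩ := by
    rw [hij', hcol]
  have := (hg (d i)).1 heq2
  exact hrank_inj i j hcol (by simpa [Fin.ext_iff] using this)

end CompRel
namespace CompRel

/-- The master extension lemma: a molecule `τ` can be copied across models
preserving its configuration relative to a matching pair. -/
lemma ext_lemma {κ : Type} {k : ℕ} {A A' : Type} [DecidableEq A] [DecidableEq A']
    (col : A → κ) (col' : A' → κ) (rich : Rich k col')
    {μ ν : Fin k → A} {μ' ν' : Fin k → A'}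
    (hμ : Function.Injective μ) (hν : Function.Injective ν)
    (hμ' : Function.Injective μ') (hν' : Function.Injective ν')
    (hc : conf col μ ν = conf col' μ' ν')
    (τ : Fin k → A) (hτ : Function.Injective τ) :
    ∃ τ' : Fin k → A', Function.Injective τ' ∧
      conf col' τ' μ' = conf col τ μ ∧ conf col' τ' ν' = conf col τ ν := by
  classical
  rw [conf_eq_iff] at hc
  obtain ⟨Hrel, Hcμ, Hcν⟩ := hc
  set S : Finset A' := (Finset.univ.image μ') ∪ (Finset.univ.image ν') with hSdef
  have hS : S.card ≤ 2 * k := by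
    have h1 : (Finset.univ.image μ').card ≤ k := by
      simpa using (Finset.card_image_le (s := (Finset.univ : Finset (Fin k))) (f := μ'))
    have h2 : (Finset.univ.image ν').card ≤ k := by
      simpa using (Finset.card_image_le (s := (Finset.univ : Finset (Fin k))) (f := ν'))
    have h3 := Finset.card_union_le (Finset.univ.image μ') (Finset.univ.image ν')
    rw [hSdef]
    omega
  obtain ⟨h, hhinj, hhcol, hhfresh⟩ := exists_fresh col' rich (fun i => col (τ i)) S hS
  have hμS : ∀ p, μ' p ∈ S := fun p =>
    Finset.mem_union_left _ (Finset.mem_image_of_mem μ' (Finset.mem_univ p))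
  have hνS : ∀ q, ν' q ∈ S := fun q =>
    Finset.mem_union_right _ (Finset.mem_image_of_mem ν' (Finset.mem_univ q))
  set τ' : Fin k → A' := fun i =>
    if hp : ∃ p, τ i = μ p then μ' hp.choose
    else if hq : ∃ q, τ i = ν q then ν' hq.choose
    else h i with hτ'def
  have key : ∀ i, (∃ p, τ i = μ p ∧ τ' i = μ' p) ∨
      ((∀ p, τ i ≠ μ p) ∧ ∃ q, τ i = ν q ∧ τ' i = ν' q) ∨
      ((∀ p, τ i ≠ μ p) ∧ (∀ q, τ i ≠ ν q) ∧ τ' i = h i) := by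
    intro i
    by_cases hp : ∃ p, τ i = μ p
    · exact Or.inl ⟨hp.choose, hp.choose_spec, by simp [hτ'def, hp]⟩
    · by_cases hq : ∃ q, τ i = ν q
      · exact Or.inr (Or.inl ⟨fun p hpp => hp ⟨p, hpp⟩,
          hq.choose, hq.choose_spec, by simp [hτ'def, hp, hq]⟩)
      · exact Or.inr (Or.inr ⟨fun p hpp => hp ⟨p, hpp⟩, fun q hqq => hq ⟨q, hqq⟩,
          by simp [hτ'def, hp, hq]⟩)
  have relμ : ∀ i p, τ' i = μ' p ↔ τ i = μ p := by
    intro i p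
    rcases key i with ⟨p₀, h1, h2⟩ | ⟨hnp, q₀, h1, h2⟩ | ⟨hnp, hnq, h2⟩
    · rw [h1, h2]
      constructor
      · intro he; rw [hμ' he]
      · intro he; rw [hμ he]
    · rw [h2]
      constructor
      · intro he
        have h3 : μ p = ν q₀ := (Hrel p q₀).mpr he.symm
        exact absurd (h1.trans h3.symm) (hnp p)
      · intro he; exact absurd he (hnp p)
    · rw [h2]
      constructor
      · intro he; exact absurd (he ▸ hμS p) (hhfresh i)
      · intro he; exact absurd he (hnp p)
  have relν : ∀ i q, τ' i = ν' q ↔ τ i = ν q := by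
    intro i q
    rcases key i with ⟨p₀, h1, h2⟩ | ⟨hnp, q₀, h1, h2⟩ | ⟨hnp, hnq, h2⟩
    · rw [h1, h2]
      exact (Hrel p₀ q).symm
    · rw [h1, h2]
      constructor
      · intro he; rw [hν' he]
      · intro he; rw [hν he]
    · rw [h2]
      constructor
      · intro he; exact absurd (he ▸ hνS q) (hhfresh i)
      · intro he; exact absurd he (hnq q)
  have colτ' : ∀ i, col' (τ' i) = col (τ i) := by
    intro i
    rcases key i with ⟨p₀, h1, h2⟩ | ⟨hnp, q₀, h1, h2⟩ | ⟨hnp, hnq, h2⟩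
    · rw [h1, h2, ← Hcμ]
    · rw [h1, h2, ← Hcν]
    · rw [h2]; exact hhcol i
  have hinj : Function.Injective τ' := by
    intro i j hij
    apply hτ
    rcases key i with ⟨p, h1, h2⟩ | ⟨_, q, h1, h2⟩ | ⟨_, _, h2⟩ <;>
      rcases key j with ⟨p', h3, h4⟩ | ⟨_, q', h3, h4⟩ | ⟨_, _, h4⟩
    · rw [h1, h3]; rw [h2, h4] at hij; rw [hμ' hij]
    · rw [h1, h3]; rw [h2, h4] at hij
      have : μ p = ν q' := (Hrel p q').mpr hij
      rw [this]
    · rw [h2, h4] at hij; exact absurd (hij ▸ hμS p) (hhfresh j)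
    · rw [h1, h3]; rw [h2, h4] at hij
      have : μ p' = ν q := (Hrel p' q).mpr hij.symm
      rw [this]
    · rw [h1, h3]; rw [h2, h4] at hij; rw [hν' hij]
    · rw [h2, h4] at hij; exact absurd (hij ▸ hνS q) (hhfresh j)
    · rw [h2, h4] at hij; exact absurd (hij.symm ▸ hμS p') (hhfresh i)
    · rw [h2, h4] at hij; exact absurd (hij.symm ▸ hνS q') (hhfresh i)
    · rw [h2, h4] at hij; rw [hhinj hij]
  refine ⟨τ', hinj, ?_, ?_⟩
  · rw [conf_eq_iff]
    exact ⟨fun i p => relμ i p, fun i => colτ' i, fun p => (Hcμ p).symm⟩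
  · rw [conf_eq_iff]
    exact ⟨fun i q => relν i q, fun i => colτ' i, fun q => (Hcν q).symm⟩

/-- Realize an injective molecule in another model, with the same colours. -/
lemma realize0 {κ : Type} {k : ℕ} {A A' : Type} [DecidableEq A] [DecidableEq A']
    (col : A → κ) (col' : A' → κ) (rich : Rich k col')
    (τ : Fin k → A) (hτ : Function.Injective τ) :
    ∃ τ' : Fin k → A', Function.Injective τ' ∧ ∀ i, col' (τ' i) = col (τ i) := by
  obtain ⟨h, hinj, hcol, _⟩ := exists_fresh col' rich (fun i => col (τ i)) ∅ (by simp)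
  exact ⟨h, hinj, hcol⟩

/-- Realize an injective pair in another (rich) model with the same configuration. -/
lemma realize_pair {κ : Type} {k : ℕ} {A A' : Type} [DecidableEq A] [DecidableEq A']
    (col : A → κ) (col' : A' → κ) (rich : Rich k col')
    (σ α : Fin k → A) (hσ : Function.Injective σ) (hα : Function.Injective α) :
    ∃ σ' α' : Fin k → A', Function.Injective σ' ∧ Function.Injective α' ∧
      conf col' σ' α' = conf col σ α := by
  obtain ⟨σ', hσ', hcol⟩ := realize0 col col' rich σ hσ
  have hcσ : conf col σ σ = conf col' σ' σ' :=
    conf_self hσ hσ' (fun p => (hcol p).symm)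
  obtain ⟨α', hα', h1, _⟩ := ext_lemma col col' rich hσ hσ hσ' hσ' hcσ α hα
  exact ⟨σ', α', hσ', hα', conf_flip h1⟩

end CompRel
namespace CompRel

/-- Canonical atom set: exactly `3k` atoms of each colour. -/
def Atoms (k : ℕ) (κ : Type) : Type := Fin (3 * k) × κ

noncomputable instance {k : ℕ} {κ : Type} : DecidableEq (Atoms k κ) := Classical.decEq _

/-- Colour function on the canonical atoms. -/
def acol {k : ℕ} {κ : Type} : Atoms k κ → κ := Prod.snd

lemma rich_atoms (k : ℕ) (κ : Type) : Rich k (acol (k := k) (κ := κ)) := by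
  intro c
  exact ⟨fun i => (i, c), fun i j h => by exact (Prod.ext_iff.mp h).1, fun i => _root_.rfl⟩

lemma eval_atom {A κ : Type} [DecidableEq A] [Fintype A] {k : ℕ}
    (M : HFModel A) (col : A → κ) (σ : Fin k → A) (p : Fin k) :
    evalForm M col σ (Form.atom p) = M.atom (σ p) := by
  rw [evalForm]

lemma mem_foldr_union {α : Type} [DecidableEq α] (L : List (Finset α)) (a : α) :
    a ∈ L.foldr (· ∪ ·) ∅ ↔ ∃ s ∈ L, a ∈ s := by
  induction L with
  | nil => simp
  | cons b L ih => simp [Finset.mem_union, ih]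

lemma mem_eval_set {A κ : Type} [DecidableEq A] [Fintype A] {k : ℕ}
    (M : HFModel A) (col : A → κ) (σ : Fin k → A) (l : List (Form k κ × Config2 k κ))
    (w : M.Obj) :
    w ∈ M.members (evalForm M col σ (Form.set l)) ↔
      ∃ x ∈ l, ∃ τ : Fin k → A, Function.Injective τ ∧ conf col τ σ = x.2 ∧
        w = evalForm M col τ x.1 := by
  rw [evalForm, M.members_mkSet, mem_foldr_union]
  constructor
  · rintro ⟨s, hs, hws⟩
    rw [List.mem_map] at hs
    obtain ⟨⟨x, hx⟩, _, rfl⟩ := hs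
    rw [Finset.mem_image] at hws
    obtain ⟨τ, hτmem, rfl⟩ := hws
    rw [Finset.mem_filter] at hτmem
    exact ⟨x, hx, τ, hτmem.2.1, hτmem.2.2, _root_.rfl⟩
  · rintro ⟨x, hx, τ, hτinj, hτconf, rfl⟩
    refine ⟨_, List.mem_map.mpr ⟨⟨x, hx⟩, List.mem_attach _ _, _root_.rfl⟩, ?_⟩
    exact Finset.mem_image_of_mem _ (Finset.mem_filter.mpr ⟨Finset.mem_univ _, hτinj, hτconf⟩)

/-- The form-equality relation `Eq(φ, ψ, c)`. -/
def FEq {k : ℕ} {κ : Type} : Form k κ → Form k κ → Config2 k κ → Prop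
  | .atom p, .atom q, c => c.rel p q = true
  | .atom _, .set _, _ => False
  | .set _, .atom _, _ => False
  | .set l, .set m, c =>
      ∀ σ₀ α₀ : Fin k → Atoms k κ, Function.Injective σ₀ → Function.Injective α₀ →
        conf acol σ₀ α₀ = c →
        ((∀ x ∈ l.attach, ∀ τ : Fin k → Atoms k κ, Function.Injective τ →
            conf acol τ σ₀ = x.1.2 →
            ∃ y ∈ m, ∃ τ' : Fin k → Atoms k κ, Function.Injective τ' ∧
              conf acol τ' α₀ = y.2 ∧ FEq x.1.1 y.1 (conf acol τ τ')) ∧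
          (∀ y ∈ m, ∀ τ' : Fin k → Atoms k κ, Function.Injective τ' →
            conf acol τ' α₀ = y.2 →
            ∃ x ∈ l.attach, ∃ τ : Fin k → Atoms k κ, Function.Injective τ ∧
              conf acol τ σ₀ = x.1.2 ∧ FEq x.1.1 y.1 (conf acol τ τ')))
  termination_by φ _ _ => sizeOf φ
  decreasing_by
    all_goals {
      obtain ⟨⟨φ', E'⟩, hmem⟩ := x
      have h := List.sizeOf_lt_of_mem hmem
      simp at h ⊢
      omega
    }

end CompRel
namespace CompRel

lemma eval_set {A κ : Type} [DecidableEq A] [Fintype A] {k : ℕ}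
    (M : HFModel A) (col : A → κ) (σ : Fin k → A) (l : List (Form k κ × Config2 k κ)) :
    ∃ s, evalForm M col σ (Form.set l) = M.mkSet s := by
  rw [evalForm]; exact ⟨_, _root_.rfl⟩

lemma mkSet_injective {A : Type} (M : HFModel A) : Function.Injective M.mkSet := by
  intro s t h
  have := congrArg M.members h
  rwa [M.members_mkSet, M.members_mkSet] at this

theorem FEq_correct {k : ℕ} {κ : Type} (φ ψ : Form k κ) {A : Type} [DecidableEq A]
    [Fintype A] (M : HFModel A) (col : A → κ) (rich : Rich k col)
    (σ τ : Fin k → A) (hσ : Function.Injective σ) (hτ : Function.Injective τ) :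
    evalForm M col σ φ = evalForm M col τ ψ ↔ FEq φ ψ (conf col σ τ) := by
  match φ, ψ with
  | .atom p, .atom q =>
    rw [eval_atom, eval_atom]
    show _ ↔ FEq _ _ _
    rw [FEq]
    simp only [conf]
    constructor
    · intro h; exact decide_eq_true (M.atom_injective h)
    · intro h; exact congrArg M.atom (of_decide_eq_true h)
  | .atom p, .set m =>
    rw [eval_atom]
    obtain ⟨s, hs⟩ := eval_set M col τ m
    rw [hs]
    show _ ↔ FEq _ _ _
    rw [FEq]
    simp [M.atom_ne_mkSet]
  | .set l, .atom q =>
    rw [eval_atom]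
    obtain ⟨s, hs⟩ := eval_set M col σ l
    rw [hs]
    show _ ↔ FEq _ _ _
    rw [FEq]
    simp [(M.atom_ne_mkSet _ _).symm]
  | .set l, .set m =>
    have richC := rich_atoms k κ
    rw [FEq]
    constructor
    · intro heq
      intro σ₀ α₀ hσ₀ hα₀ hc₀
      constructor
      · rintro ⟨x, hx⟩ - τ₁₀ hτ₁₀ hconf₁
        obtain ⟨τ₁, hτ₁inj, hτ₁σ, hτ₁τ⟩ :=
          ext_lemma acol col rich hσ₀ hα₀ hσ hτ hc₀ τ₁₀ hτ₁₀
        have hmem : evalForm M col τ₁ x.1 ∈ M.members (evalForm M col σ (Form.set l)) :=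
          (mem_eval_set M col σ l _).mpr ⟨x, hx, τ₁, hτ₁inj, by rw [hτ₁σ, hconf₁], _root_.rfl⟩
        rw [heq, mem_eval_set] at hmem
        obtain ⟨y, hy, τ₂, hτ₂inj, hτ₂τ, heval⟩ := hmem
        obtain ⟨τ₂₀, hτ₂₀inj, hτ₂₀τ₁₀, hτ₂₀α₀⟩ :=
          ext_lemma col acol richC hτ₁inj hτ hτ₁₀ hα₀ hτ₁τ τ₂ hτ₂inj
        refine ⟨y, hy, τ₂₀, hτ₂₀inj, by rw [hτ₂₀α₀, hτ₂τ], ?_⟩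
        have hcc : conf acol τ₁₀ τ₂₀ = conf col τ₁ τ₂ := conf_flip hτ₂₀τ₁₀
        rw [hcc, ← FEq_correct x.1 y.1 M col rich τ₁ τ₂ hτ₁inj hτ₂inj]
        exact heval
      · rintro y hy τ₂₀ hτ₂₀ hconf₂
        obtain ⟨τ₂, hτ₂inj, hτ₂σ, hτ₂τ⟩ :=
          ext_lemma acol col rich hσ₀ hα₀ hσ hτ hc₀ τ₂₀ hτ₂₀
        have hmem : evalForm M col τ₂ y.1 ∈ M.members (evalForm M col τ (Form.set m)) :=
          (mem_eval_set M col τ m _).mpr ⟨y, hy, τ₂, hτ₂inj, by rw [hτ₂τ, hconf₂], _root_.rfl⟩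
        rw [← heq, mem_eval_set] at hmem
        obtain ⟨x, hx, τ₁, hτ₁inj, hτ₁σ, heval⟩ := hmem
        obtain ⟨τ₁₀, hτ₁₀inj, hτ₁₀τ₂₀, hτ₁₀σ₀⟩ :=
          ext_lemma col acol richC hτ₂inj hσ hτ₂₀ hσ₀ hτ₂σ τ₁ hτ₁inj
        refine ⟨⟨x, hx⟩, List.mem_attach _ _, τ₁₀, hτ₁₀inj, by rw [hτ₁₀σ₀, hτ₁σ], ?_⟩
        have hcc : conf acol τ₁₀ τ₂₀ = conf col τ₁ τ₂ := by
          rw [hτ₁₀τ₂₀]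
        rw [hcc, ← FEq_correct x.1 y.1 M col rich τ₁ τ₂ hτ₁inj hτ₂inj]
        exact heval.symm
    · intro hFEq
      obtain ⟨σ₀, α₀, hσ₀, hα₀, hc₀⟩ := realize_pair col acol richC σ τ hσ hτ
      have H := hFEq σ₀ α₀ hσ₀ hα₀ hc₀
      obtain ⟨s₁, hs₁⟩ := eval_set M col σ l
      obtain ⟨s₂, hs₂⟩ := eval_set M col τ m
      rw [hs₁, hs₂]
      congr 1
      apply Finset.ext
      intro w
      have hw₁ : w ∈ s₁ ↔ w ∈ M.members (evalForm M col σ (Form.set l)) := by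
        rw [hs₁, M.members_mkSet]
      have hw₂ : w ∈ s₂ ↔ w ∈ M.members (evalForm M col τ (Form.set m)) := by
        rw [hs₂, M.members_mkSet]
      rw [hw₁, hw₂, mem_eval_set, mem_eval_set]
      constructor
      · rintro ⟨x, hx, τ₁, hτ₁inj, hτ₁σ, rfl⟩
        obtain ⟨τ₁₀, hτ₁₀inj, hτ₁₀σ₀, hτ₁₀α₀⟩ :=
          ext_lemma col acol richC hσ hτ hσ₀ hα₀ hc₀.symm τ₁ hτ₁inj
        obtain ⟨y, hy, τ₂₀, hτ₂₀inj, hτ₂₀α₀, hfeq⟩ :=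
          H.1 ⟨x, hx⟩ (List.mem_attach _ _) τ₁₀ hτ₁₀inj (by rw [hτ₁₀σ₀, hτ₁σ])
        obtain ⟨τ₂, hτ₂inj, hτ₂τ₁, hτ₂τ⟩ :=
          ext_lemma acol col rich hτ₁₀inj hα₀ hτ₁inj hτ hτ₁₀α₀ τ₂₀ hτ₂₀inj
        refine ⟨y, hy, τ₂, hτ₂inj, by rw [hτ₂τ, hτ₂₀α₀], ?_⟩
        have hcc : conf acol τ₁₀ τ₂₀ = conf col τ₁ τ₂ := conf_flip hτ₂τ₁.symm
        rw [hcc] at hfeq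
        rw [← FEq_correct x.1 y.1 M col rich τ₁ τ₂ hτ₁inj hτ₂inj] at hfeq
        exact hfeq
      · rintro ⟨y, hy, τ₂, hτ₂inj, hτ₂τ, rfl⟩
        obtain ⟨τ₂₀, hτ₂₀inj, hτ₂₀σ₀, hτ₂₀α₀⟩ :=
          ext_lemma col acol richC hσ hτ hσ₀ hα₀ hc₀.symm τ₂ hτ₂inj
        obtain ⟨x, hx, τ₁₀, hτ₁₀inj, hτ₁₀σ₀, hfeq⟩ :=
          H.2 y hy τ₂₀ hτ₂₀inj (by rw [hτ₂₀α₀, hτ₂τ])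
        obtain ⟨τ₁, hτ₁inj, hτ₁τ₂, hτ₁σ⟩ :=
          ext_lemma acol col rich hτ₂₀inj hσ₀ hτ₂inj hσ hτ₂₀σ₀ τ₁₀ hτ₁₀inj
        refine ⟨x.1, x.2, τ₁, hτ₁inj, by rw [hτ₁σ, hτ₁₀σ₀], ?_⟩
        have hcc : conf acol τ₁₀ τ₂₀ = conf col τ₁ τ₂ := by rw [hτ₁τ₂]
        rw [hcc] at hfeq
        rw [← FEq_correct x.1.1 y.1 M col rich τ₁ τ₂ hτ₁inj hτ₂inj] at hfeq
        exact hfeq.symm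
  termination_by sizeOf φ
  decreasing_by
    all_goals {
      first
      | (rcases x with ⟨φ', E'⟩; have h := List.sizeOf_lt_of_mem hx; simp at h ⊢; omega)
      | (obtain ⟨⟨φ', E'⟩, hmem⟩ := x; have h := List.sizeOf_lt_of_mem hmem;
         simp at h ⊢; omega)
    }

end CompRel
namespace CompRel

variable {κ : Type} {k : ℕ}

/-- `φ * σ ∈ ψ * τ` as a relation on forms and configurations. -/
def FMem (φ ψ : Form k κ) (c : Config2 k κ) : Prop :=
  match ψ with
  | .atom _ => False
  | .set m =>
      ∀ σ₀ τ₀ : Fin k → Atoms k κ, Function.Injective σ₀ → Function.Injective τ₀ →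
        conf acol σ₀ τ₀ = c →
        ∃ y ∈ m, ∃ τ' : Fin k → Atoms k κ, Function.Injective τ' ∧
          conf acol τ' τ₀ = y.2 ∧ FEq φ y.1 (conf acol σ₀ τ')

lemma FMem_correct (φ ψ : Form k κ) {A : Type} [DecidableEq A] [Fintype A]
    (M : HFModel A) (col : A → κ) (rich : Rich k col)
    (σ τ : Fin k → A) (hσ : Function.Injective σ) (hτ : Function.Injective τ) :
    evalForm M col σ φ ∈ M.members (evalForm M col τ ψ) ↔ FMem φ ψ (conf col σ τ) := by
  have richC := rich_atoms k κ
  match ψ with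
  | .atom q =>
    rw [eval_atom, M.members_atom]
    simp [FMem]
  | .set m =>
    rw [mem_eval_set]
    constructor
    · rintro ⟨y, hy, τ', hτ'inj, hτ'τ, heval⟩
      intro σ₀ τ₀ hσ₀ hτ₀ hc₀
      obtain ⟨τ'₀, hτ'₀inj, hτ'₀σ₀, hτ'₀τ₀⟩ :=
        ext_lemma col acol richC hσ hτ hσ₀ hτ₀ hc₀.symm τ' hτ'inj
      refine ⟨y, hy, τ'₀, hτ'₀inj, by rw [hτ'₀τ₀, hτ'τ], ?_⟩
      have hcc : conf acol σ₀ τ'₀ = conf col σ τ' := conf_flip hτ'₀σ₀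
      rw [hcc, ← FEq_correct φ y.1 M col rich σ τ' hσ hτ'inj]
      exact heval
    · intro H
      obtain ⟨σ₀, τ₀, hσ₀, hτ₀, hc₀⟩ := realize_pair col acol richC σ τ hσ hτ
      obtain ⟨y, hy, τ'₀, hτ'₀inj, hτ'₀τ₀, hfeq⟩ := H σ₀ τ₀ hσ₀ hτ₀ hc₀
      obtain ⟨τ', hτ'inj, hτ'σ, hτ'τ⟩ :=
        ext_lemma acol col rich hσ₀ hτ₀ hσ hτ hc₀ τ'₀ hτ'₀inj
      refine ⟨y, hy, τ', hτ'inj, by rw [hτ'τ, hτ'₀τ₀], ?_⟩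
      have hcc : conf acol σ₀ τ'₀ = conf col σ τ' := conf_flip hτ'σ.symm
      rw [hcc, ← FEq_correct φ y.1 M col rich σ τ' hσ hτ'inj] at hfeq
      exact hfeq

/-- `φ * σ` is the first component of the pair `χ * α`. -/
def FFst (φ χ : Form k κ) (c : Config2 k κ) : Prop :=
  match χ with
  | .atom _ => False
  | .set l =>
      ∀ σ₀ α₀ : Fin k → Atoms k κ, Function.Injective σ₀ → Function.Injective α₀ →
        conf acol σ₀ α₀ = c →
        ∀ p ∈ l, ∀ τ₁₀ : Fin k → Atoms k κ, Function.Injective τ₁₀ →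
          conf acol τ₁₀ α₀ = p.2 → FMem φ p.1 (conf acol σ₀ τ₁₀)

lemma members_kpair {A : Type} (M : HFModel A) (x y : M.Obj) :
    M.members (kpair M x y) = {M.mkSet {x}, M.mkSet {x, y}} := by
  rw [kpair, M.members_mkSet]

lemma FFst_correct (φ χ : Form k κ) {A : Type} [DecidableEq A] [Fintype A]
    (M : HFModel A) (col : A → κ) (rich : Rich k col)
    (σ α : Fin k → A) (hσ : Function.Injective σ) (hα : Function.Injective α)
    (x y : M.Obj) (h : evalForm M col α χ = kpair M x y) :
    x = evalForm M col σ φ ↔ FFst φ χ (conf col σ α) := by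
  have richC := rich_atoms k κ
  match χ with
  | .atom q =>
    rw [eval_atom, kpair] at h
    exact absurd h (M.atom_ne_mkSet _ _)
  | .set l =>
    have hmem : ∀ w ∈ M.members (evalForm M col α (Form.set l)), x ∈ M.members w := by
      intro w hw
      rw [h, members_kpair] at hw
      rcases Finset.mem_insert.mp hw with rfl | hw
      · rw [M.members_mkSet]; exact Finset.mem_singleton_self x
      · rw [Finset.mem_singleton.mp hw, M.members_mkSet]
        exact Finset.mem_insert_self x _
    constructor
    · intro hx
      intro σ₀ α₀ hσ₀ hα₀ hc₀ p hp τ₁₀ hτ₁₀inj hτ₁₀α₀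
      obtain ⟨τ₁, hτ₁inj, hτ₁σ, hτ₁α⟩ :=
        ext_lemma acol col rich hσ₀ hα₀ hσ hα hc₀ τ₁₀ hτ₁₀inj
      have hw : evalForm M col τ₁ p.1 ∈ M.members (evalForm M col α (Form.set l)) :=
        (mem_eval_set M col α l _).mpr ⟨p, hp, τ₁, hτ₁inj, by rw [hτ₁α, hτ₁₀α₀], _root_.rfl⟩
      have hx' : evalForm M col σ φ ∈ M.members (evalForm M col τ₁ p.1) :=
        hx ▸ hmem _ hw
      rw [FMem_correct φ p.1 M col rich σ τ₁ hσ hτ₁inj] at hx'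
      have hcc : conf acol σ₀ τ₁₀ = conf col σ τ₁ := conf_flip hτ₁σ.symm
      rw [hcc]
      exact hx'
    · intro H
      obtain ⟨σ₀, α₀, hσ₀, hα₀, hc₀⟩ := realize_pair col acol richC σ α hσ hα
      have hx1 : M.mkSet {x} ∈ M.members (evalForm M col α (Form.set l)) := by
        rw [h, members_kpair]
        exact Finset.mem_insert_self _ _
      rw [mem_eval_set] at hx1
      obtain ⟨p, hp, τ₁, hτ₁inj, hτ₁α, hval⟩ := hx1
      obtain ⟨τ₁₀, hτ₁₀inj, hτ₁₀σ₀, hτ₁₀α₀⟩ :=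
        ext_lemma col acol richC hσ hα hσ₀ hα₀ hc₀.symm τ₁ hτ₁inj
      have hfm := H σ₀ α₀ hσ₀ hα₀ hc₀ p hp τ₁₀ hτ₁₀inj (by rw [hτ₁₀α₀, hτ₁α])
      have hcc : conf acol σ₀ τ₁₀ = conf col σ τ₁ := conf_flip hτ₁₀σ₀
      rw [hcc, ← FMem_correct φ p.1 M col rich σ τ₁ hσ hτ₁inj] at hfm
      rw [← hval, M.members_mkSet, Finset.mem_singleton] at hfm
      exact hfm.symm

end CompRel
namespace CompRel

variable {κ : Type} {k : ℕ}

/-- `ψ * τ` is a member of a member of `χ * α`. -/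
def FMem2 (ψ χ : Form k κ) (e : Config2 k κ) : Prop :=
  match χ with
  | .atom _ => False
  | .set l =>
      ∀ τc αc : Fin k → Atoms k κ, Function.Injective τc → Function.Injective αc →
        conf acol τc αc = e →
        ∃ p ∈ l, ∃ τ₁c : Fin k → Atoms k κ, Function.Injective τ₁c ∧
          conf acol τ₁c αc = p.2 ∧ FMem ψ p.1 (conf acol τc τ₁c)

/-- `ψ * τ` fails to be a member of some member of `χ * α`. -/
def FNotMem (ψ χ : Form k κ) (e : Config2 k κ) : Prop :=
  match χ with
  | .atom _ => False
  | .set l =>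
      ∀ τc αc : Fin k → Atoms k κ, Function.Injective τc → Function.Injective αc →
        conf acol τc αc = e →
        ∃ p ∈ l, ∃ τ₁c : Fin k → Atoms k κ, Function.Injective τ₁c ∧
          conf acol τ₁c αc = p.2 ∧ ¬ FMem ψ p.1 (conf acol τc τ₁c)

lemma FMem2_correct (ψ χ : Form k κ) {A : Type} [DecidableEq A] [Fintype A]
    (M : HFModel A) (col : A → κ) (rich : Rich k col)
    (τz α : Fin k → A) (hτz : Function.Injective τz) (hα : Function.Injective α) :
    (∃ w ∈ M.members (evalForm M col α χ), evalForm M col τz ψ ∈ M.members w) ↔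
      FMem2 ψ χ (conf col τz α) := by
  have richC := rich_atoms k κ
  match χ with
  | .atom q => rw [eval_atom, M.members_atom]; simp [FMem2]
  | .set l =>
    constructor
    · rintro ⟨w, hw, hzw⟩
      rw [mem_eval_set] at hw
      obtain ⟨p, hp, τ₁, hτ₁inj, hτ₁α, rfl⟩ := hw
      intro τc αc hτc hαc hc₀
      obtain ⟨τ₁c, hτ₁cinj, hτ₁cτc, hτ₁cαc⟩ :=
        ext_lemma col acol richC hτz hα hτc hαc hc₀.symm τ₁ hτ₁inj
      refine ⟨p, hp, τ₁c, hτ₁cinj, by rw [hτ₁cαc, hτ₁α], ?_⟩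
      have hcc : conf acol τc τ₁c = conf col τz τ₁ := conf_flip hτ₁cτc
      rw [hcc, ← FMem_correct ψ p.1 M col rich τz τ₁ hτz hτ₁inj]
      exact hzw
    · intro H
      obtain ⟨τc, αc, hτc, hαc, hc₀⟩ := realize_pair col acol richC τz α hτz hα
      obtain ⟨p, hp, τ₁c, hτ₁cinj, hτ₁cαc, hfm⟩ := H τc αc hτc hαc hc₀
      obtain ⟨τ₁, hτ₁inj, hτ₁τz, hτ₁α⟩ :=
        ext_lemma acol col rich hτc hαc hτz hα hc₀ τ₁c hτ₁cinj
      have hcc : conf acol τc τ₁c = conf col τz τ₁ := conf_flip hτ₁τz.symm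
      rw [hcc, ← FMem_correct ψ p.1 M col rich τz τ₁ hτz hτ₁inj] at hfm
      exact ⟨evalForm M col τ₁ p.1,
        (mem_eval_set M col α l _).mpr ⟨p, hp, τ₁, hτ₁inj, by rw [hτ₁α, hτ₁cαc], _root_.rfl⟩, hfm⟩

lemma FNotMem_correct (ψ χ : Form k κ) {A : Type} [DecidableEq A] [Fintype A]
    (M : HFModel A) (col : A → κ) (rich : Rich k col)
    (τz α : Fin k → A) (hτz : Function.Injective τz) (hα : Function.Injective α) :
    (∃ w ∈ M.members (evalForm M col α χ), evalForm M col τz ψ ∉ M.members w) ↔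
      FNotMem ψ χ (conf col τz α) := by
  have richC := rich_atoms k κ
  match χ with
  | .atom q => rw [eval_atom, M.members_atom]; simp [FNotMem]
  | .set l =>
    constructor
    · rintro ⟨w, hw, hzw⟩
      rw [mem_eval_set] at hw
      obtain ⟨p, hp, τ₁, hτ₁inj, hτ₁α, rfl⟩ := hw
      intro τc αc hτc hαc hc₀
      obtain ⟨τ₁c, hτ₁cinj, hτ₁cτc, hτ₁cαc⟩ :=
        ext_lemma col acol richC hτz hα hτc hαc hc₀.symm τ₁ hτ₁inj
      refine ⟨p, hp, τ₁c, hτ₁cinj, by rw [hτ₁cαc, hτ₁α], ?_⟩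
      have hcc : conf acol τc τ₁c = conf col τz τ₁ := conf_flip hτ₁cτc
      rw [hcc, ← FMem_correct ψ p.1 M col rich τz τ₁ hτz hτ₁inj]
      exact hzw
    · intro H
      obtain ⟨τc, αc, hτc, hαc, hc₀⟩ := realize_pair col acol richC τz α hτz hα
      obtain ⟨p, hp, τ₁c, hτ₁cinj, hτ₁cαc, hfm⟩ := H τc αc hτc hαc hc₀
      obtain ⟨τ₁, hτ₁inj, hτ₁τz, hτ₁α⟩ :=
        ext_lemma acol col rich hτc hαc hτz hα hc₀ τ₁c hτ₁cinj
      have hcc : conf acol τc τ₁c = conf col τz τ₁ := conf_flip hτ₁τz.symm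
      rw [hcc, ← FMem_correct ψ p.1 M col rich τz τ₁ hτz hτ₁inj] at hfm
      exact ⟨evalForm M col τ₁ p.1,
        (mem_eval_set M col α l _).mpr ⟨p, hp, τ₁, hτ₁inj, by rw [hτ₁α, hτ₁cαc], _root_.rfl⟩, hfm⟩

/-- All members of members of `χ * α` coincide. -/
def FFlat (χ : Form k κ) (e : Config2 k κ) : Prop :=
  match χ with
  | .atom _ => True
  | .set l =>
      ∀ τc αc : Fin k → Atoms k κ, Function.Injective τc → Function.Injective αc →
        conf acol τc αc = e →
        ∀ p ∈ l, ∀ τ₁c : Fin k → Atoms k κ, Function.Injective τ₁c →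
          conf acol τ₁c αc = p.2 →
        ∀ m, p.1 = Form.set m →
        ∀ q ∈ m, ∀ τ₂c : Fin k → Atoms k κ, Function.Injective τ₂c →
          conf acol τ₂c τ₁c = q.2 →
        ∀ p' ∈ l, ∀ τ₁c' : Fin k → Atoms k κ, Function.Injective τ₁c' →
          conf acol τ₁c' αc = p'.2 →
        ∀ m', p'.1 = Form.set m' →
        ∀ q' ∈ m', ∀ τ₂c' : Fin k → Atoms k κ, Function.Injective τ₂c' →
          conf acol τ₂c' τ₁c' = q'.2 →
        FEq q.1 q'.1 (conf acol τ₂c τ₂c')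

lemma FFlat_correct (χ : Form k κ) {A : Type} [DecidableEq A] [Fintype A]
    (M : HFModel A) (col : A → κ) (rich : Rich k col)
    (τz α : Fin k → A) (hτz : Function.Injective τz) (hα : Function.Injective α) :
    (∀ w₁ ∈ M.members (evalForm M col α χ), ∀ w₂ ∈ M.members (evalForm M col α χ),
      ∀ z₁ ∈ M.members w₁, ∀ z₂ ∈ M.members w₂, z₁ = z₂) ↔
      FFlat χ (conf col τz α) := by
  have richC := rich_atoms k κ
  match χ with
  | .atom q =>
    rw [eval_atom, M.members_atom]
    simp [FFlat]
  | .set l =>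
    have hcolα : ∀ i, col (α i) = col (α i) := fun _ => _root_.rfl
    constructor
    · intro H
      intro τc αc hτc hαc hc₀ p hp τ₁c hτ₁c hτ₁cαc m hm q hq τ₂c hτ₂c hτ₂cτ₁c
        p' hp' τ₁c' hτ₁c' hτ₁c'αc m' hm' q' hq' τ₂c' hτ₂c' hτ₂c'τ₁c'
      have hαα : conf acol αc αc = conf col α α := by
        apply conf_self hαc hα
        intro i
        exact ((conf_eq_iff acol col τc αc τz α).mp hc₀).2.2 i
      obtain ⟨τ₁, hτ₁inj, hτ₁α, _⟩ :=
        ext_lemma acol col rich hαc hαc hα hα hαα τ₁c hτ₁c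
      obtain ⟨τ₂, hτ₂inj, hτ₂τ₁, hτ₂α⟩ :=
        ext_lemma acol col rich hτ₁c hαc hτ₁inj hα hτ₁α.symm τ₂c hτ₂c
      obtain ⟨τ₁', hτ₁'inj, hτ₁'α, hτ₁'τ₂⟩ :=
        ext_lemma acol col rich hαc hτ₂c hα hτ₂inj (conf_flip hτ₂α).symm τ₁c' hτ₁c'
      obtain ⟨τ₂', hτ₂'inj, hτ₂'τ₁', hτ₂'τ₂⟩ :=
        ext_lemma acol col rich hτ₁c' hτ₂c hτ₁'inj hτ₂inj hτ₁'τ₂.symm τ₂c' hτ₂c'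
      have hw₁ : evalForm M col τ₁ p.1 ∈ M.members (evalForm M col α (Form.set l)) :=
        (mem_eval_set M col α l _).mpr ⟨p, hp, τ₁, hτ₁inj, by rw [hτ₁α, hτ₁cαc], _root_.rfl⟩
      have hw₂ : evalForm M col τ₁' p'.1 ∈ M.members (evalForm M col α (Form.set l)) :=
        (mem_eval_set M col α l _).mpr ⟨p', hp', τ₁', hτ₁'inj, by rw [hτ₁'α, hτ₁c'αc], _root_.rfl⟩
      have hz₁ : evalForm M col τ₂ q.1 ∈ M.members (evalForm M col τ₁ p.1) := by
        rw [hm, mem_eval_set]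
        exact ⟨q, hq, τ₂, hτ₂inj, by rw [hτ₂τ₁, hτ₂cτ₁c], _root_.rfl⟩
      have hz₂ : evalForm M col τ₂' q'.1 ∈ M.members (evalForm M col τ₁' p'.1) := by
        rw [hm', mem_eval_set]
        exact ⟨q', hq', τ₂', hτ₂'inj, by rw [hτ₂'τ₁', hτ₂c'τ₁c'], _root_.rfl⟩
      have heq := H _ hw₁ _ hw₂ _ hz₁ _ hz₂
      have hcc : conf acol τ₂c τ₂c' = conf col τ₂ τ₂' := conf_flip hτ₂'τ₂.symm
      rw [hcc, ← FEq_correct q.1 q'.1 M col rich τ₂ τ₂' hτ₂inj hτ₂'inj]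
      exact heq
    · intro H
      intro w₁ hw₁ w₂ hw₂ z₁ hz₁ z₂ hz₂
      rw [mem_eval_set] at hw₁ hw₂
      obtain ⟨p, hp, τ₁, hτ₁inj, hτ₁α, rfl⟩ := hw₁
      obtain ⟨p', hp', τ₁', hτ₁'inj, hτ₁'α, rfl⟩ := hw₂
      match hm : p.1 with
      | .atom _ => rw [hm, eval_atom, M.members_atom] at hz₁; exact absurd hz₁ (by simp)
      | .set m =>
      match hm' : p'.1 with
      | .atom _ => rw [hm', eval_atom, M.members_atom] at hz₂; exact absurd hz₂ (by simp)
      | .set m' =>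
      rw [hm, mem_eval_set] at hz₁
      rw [hm', mem_eval_set] at hz₂
      obtain ⟨q, hq, τ₂, hτ₂inj, hτ₂τ₁, rfl⟩ := hz₁
      obtain ⟨q', hq', τ₂', hτ₂'inj, hτ₂'τ₁', rfl⟩ := hz₂
      obtain ⟨τc, αc, hτc, hαc, hc₀⟩ := realize_pair col acol richC τz α hτz hα
      have hαα : conf col α α = conf acol αc αc := by
        apply conf_self hα hαc
        intro i
        exact (((conf_eq_iff acol col τc αc τz α).mp hc₀).2.2 i).symm
      obtain ⟨τ₁c, hτ₁cinj, hτ₁cαc, _⟩ :=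
        ext_lemma col acol richC hα hα hαc hαc hαα τ₁ hτ₁inj
      obtain ⟨τ₂c, hτ₂cinj, hτ₂cτ₁c, hτ₂cαc⟩ :=
        ext_lemma col acol richC hτ₁inj hα hτ₁cinj hαc hτ₁cαc.symm τ₂ hτ₂inj
      obtain ⟨τ₁c', hτ₁c'inj, hτ₁c'αc, hτ₁c'τ₂c⟩ :=
        ext_lemma col acol richC hα hτ₂inj hαc hτ₂cinj (conf_flip hτ₂cαc).symm τ₁' hτ₁'inj
      obtain ⟨τ₂c', hτ₂c'inj, hτ₂c'τ₁c', hτ₂c'τ₂c⟩ :=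
        ext_lemma col acol richC hτ₁'inj hτ₂inj hτ₁c'inj hτ₂cinj hτ₁c'τ₂c.symm τ₂' hτ₂'inj
      have hfeq := H τc αc hτc hαc hc₀ p hp τ₁c hτ₁cinj (by rw [hτ₁cαc, hτ₁α]) m hm
        q hq τ₂c hτ₂cinj (by rw [hτ₂cτ₁c, hτ₂τ₁]) p' hp' τ₁c' hτ₁c'inj
        (by rw [hτ₁c'αc, hτ₁'α]) m' hm' q' hq' τ₂c' hτ₂c'inj (by rw [hτ₂c'τ₁c', hτ₂'τ₁'])
      have hcc : conf acol τ₂c τ₂c' = conf col τ₂ τ₂' := conf_flip hτ₂c'τ₂c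
      rw [hcc, ← FEq_correct q.1 q'.1 M col rich τ₂ τ₂' hτ₂inj hτ₂'inj] at hfeq
      exact hfeq

/-- `ψ * τ` is the second component of the pair `χ * α`. -/
def FSnd (ψ χ : Form k κ) (e : Config2 k κ) : Prop :=
  FMem2 ψ χ e ∧ (FNotMem ψ χ e ∨ FFlat χ e)

lemma FSnd_correct (ψ χ : Form k κ) {A : Type} [DecidableEq A] [Fintype A]
    (M : HFModel A) (col : A → κ) (rich : Rich k col)
    (τz α : Fin k → A) (hτz : Function.Injective τz) (hα : Function.Injective α)
    (x y : M.Obj) (h : evalForm M col α χ = kpair M x y) :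
    evalForm M col τz ψ = y ↔ FSnd ψ χ (conf col τz α) := by
  rw [FSnd, ← FMem2_correct ψ χ M col rich τz α hτz hα,
    ← FNotMem_correct ψ χ M col rich τz α hτz hα,
    ← FFlat_correct χ M col rich τz α hτz hα, h, members_kpair]
  have hmx : M.members (M.mkSet {x}) = {x} := M.members_mkSet _
  have hmxy : M.members (M.mkSet {x, y}) = {x, y} := M.members_mkSet _
  set z := evalForm M col τz ψ
  constructor
  · rintro rfl
    constructor
    · refine ⟨M.mkSet {x, z}, ?_, ?_⟩
      · exact Finset.mem_insert.mpr (Or.inr (Finset.mem_singleton_self _))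
      · rw [hmxy]; exact Finset.mem_insert.mpr (Or.inr (Finset.mem_singleton_self _))
    · by_cases hxy : x = z
      · right
        have hset : ({x, z} : Finset M.Obj) = {x} := by rw [← hxy]; simp
        intro w₁ hw₁ w₂ hw₂ z₁ hz₁ z₂ hz₂
        have hmem1 : z₁ ∈ ({x} : Finset M.Obj) := by
          rcases Finset.mem_insert.mp hw₁ with rfl | hw₁
          · rwa [hmx] at hz₁
          · rw [Finset.mem_singleton.mp hw₁, hmxy, hset] at hz₁; exact hz₁
        have hmem2 : z₂ ∈ ({x} : Finset M.Obj) := by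
          rcases Finset.mem_insert.mp hw₂ with rfl | hw₂
          · rwa [hmx] at hz₂
          · rw [Finset.mem_singleton.mp hw₂, hmxy, hset] at hz₂; exact hz₂
        rw [Finset.mem_singleton.mp hmem1, Finset.mem_singleton.mp hmem2]
      · left
        refine ⟨M.mkSet {x}, Finset.mem_insert_self _ _, ?_⟩
        rw [hmx, Finset.mem_singleton]
        exact fun hc => hxy hc.symm
  · rintro ⟨⟨w, hw, hzw⟩, hrest⟩
    have hz_mem : z = x ∨ z = y := by
      rcases Finset.mem_insert.mp hw with rfl | hw
      · rw [hmx, Finset.mem_singleton] at hzw; exact Or.inl hzw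
      · rw [Finset.mem_singleton.mp hw, hmxy] at hzw
        rcases Finset.mem_insert.mp hzw with hz | hz
        · exact Or.inl hz
        · exact Or.inr (Finset.mem_singleton.mp hz)
    rcases hz_mem with hzx | hzy
    · -- z = x; show x = y using hrest
      rcases hrest with ⟨w', hw', hzw'⟩ | hflat
      · exfalso
        apply hzw'
        rcases Finset.mem_insert.mp hw' with rfl | hw'
        · rw [hmx, hzx]; exact Finset.mem_singleton_self _
        · rw [Finset.mem_singleton.mp hw', hmxy, hzx]
          exact Finset.mem_insert_self _ _
      · have := hflat (M.mkSet {x}) (Finset.mem_insert_self _ _)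
          (M.mkSet {x, y}) (Finset.mem_insert.mpr (Or.inr (Finset.mem_singleton_self _)))
          x (by rw [hmx]; exact Finset.mem_singleton_self _)
          y (by rw [hmxy]; exact Finset.mem_insert.mpr (Or.inr (Finset.mem_singleton_self _)))
        rw [hzx, this]
    · exact hzy

end CompRel
namespace CompRel

variable {κ : Type} {k : ℕ}

/-- The component-extraction relation `Π⁽ʲ⁾` for `ℓ`-tuples. -/
def PiRel : (ℓ : ℕ) → (j : ℕ) → Form k κ → Form k κ → Config2 k κ → Prop
  | 0, _, _, _, _ => True
  | 1, _, φ, χ, c => FEq φ χ c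
  | (_ + 2), 0, φ, χ, c => FFst φ χ c
  | (n + 2), (j + 1), φ, χ, c =>
      ∀ σ₀ α₀ : Fin k → Atoms k κ, Function.Injective σ₀ → Function.Injective α₀ →
        conf acol σ₀ α₀ = c →
        ∀ ψ : Form k κ, ∀ τ₀ : Fin k → Atoms k κ, Function.Injective τ₀ →
          FSnd ψ χ (conf acol τ₀ α₀) →
          PiRel (n + 1) j φ ψ (conf acol σ₀ τ₀)

theorem PiRel_correct (ℓ j : ℕ) (hj : j < ℓ) {A : Type} [DecidableEq A] [Fintype A]
    (M : HFModel A) (col : A → κ) (rich : Rich k col) (φ χ : Form k κ)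
    (σ α : Fin k → A) (hσ : Function.Injective σ) (hα : Function.Injective α)
    (comps : Fin ℓ → M.Obj) (h : evalForm M col α χ = tupleObj M ℓ comps) :
    comps ⟨j, hj⟩ = evalForm M col σ φ ↔ PiRel ℓ j φ χ (conf col σ α) := by
  have richC := rich_atoms k κ
  match ℓ, j with
  | 1, 0 =>
    rw [tupleObj] at h
    show comps ⟨0, hj⟩ = _ ↔ FEq φ χ (conf col σ α)
    rw [← FEq_correct φ χ M col rich σ α hσ hα, h]
    have : (⟨0, hj⟩ : Fin 1) = 0 := _root_.rfl
    rw [this]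
    exact eq_comm
  | 1, (j + 1) => omega
  | (n + 2), 0 =>
    rw [tupleObj] at h
    show _ ↔ FFst φ χ (conf col σ α)
    rw [← FFst_correct φ χ M col rich σ α hσ hα (comps 0) _ h]
    have : (⟨0, hj⟩ : Fin (n + 2)) = 0 := _root_.rfl
    rw [this]
  | (n + 2), (j + 1) =>
    rw [tupleObj] at h
    have hj' : j < n + 1 := by omega
    show _ ↔ PiRel (n + 2) (j + 1) φ χ (conf col σ α)
    rw [PiRel]
    constructor
    · intro hcj σ₀ α₀ hσ₀ hα₀ hc₀ ψ τ₀ hτ₀ hsnd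
      obtain ⟨τz, hτzinj, hτzσ, hτzα⟩ :=
        ext_lemma acol col rich hσ₀ hα₀ hσ hα hc₀ τ₀ hτ₀
      have hsnd' : FSnd ψ χ (conf col τz α) := by rwa [hτzα]
      have hy : evalForm M col τz ψ = tupleObj M (n + 1) (fun i => comps i.succ) :=
        (FSnd_correct ψ χ M col rich τz α hτzinj hα (comps 0) _ h).mpr hsnd'
      have hrec := PiRel_correct (n + 1) j hj' M col rich φ ψ σ τz hσ hτzinj
        (fun i => comps i.succ) hy
      have hidx : comps (⟨j, hj'⟩ : Fin (n + 1)).succ = comps ⟨j + 1, hj⟩ := _root_.rfl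
      rw [hidx] at hrec
      have hcc : conf acol σ₀ τ₀ = conf col σ τz := conf_flip hτzσ.symm
      rw [hcc]
      exact hrec.mp hcj
    · intro hPi
      match χ, h with
      | .atom q, h =>
        rw [eval_atom, kpair] at h
        exact absurd h (M.atom_ne_mkSet _ _)
      | .set l, h =>
        have hw : M.mkSet {comps 0, tupleObj M (n + 1) (fun i => comps i.succ)} ∈
            M.members (evalForm M col α (Form.set l)) := by
          rw [h, members_kpair]
          exact Finset.mem_insert.mpr (Or.inr (Finset.mem_singleton_self _))
        rw [mem_eval_set] at hw
        obtain ⟨p, hp, τ₁, hτ₁inj, hτ₁α, hw'⟩ := hw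
        have hy : tupleObj M (n + 1) (fun i => comps i.succ) ∈
            M.members (evalForm M col τ₁ p.1) := by
          rw [← hw', M.members_mkSet]
          exact Finset.mem_insert.mpr (Or.inr (Finset.mem_singleton_self _))
        match hm : p.1 with
        | .atom _ =>
          rw [hm, eval_atom, M.members_atom] at hy
          exact absurd hy (by simp)
        | .set m =>
          rw [hm, mem_eval_set] at hy
          obtain ⟨q, hq, τz, hτzinj, hτzτ₁, hyz⟩ := hy
          obtain ⟨σ₀, α₀, hσ₀, hα₀, hc₀⟩ := realize_pair col acol richC σ α hσ hα
          obtain ⟨τ₀, hτ₀inj, hτ₀σ₀, hτ₀α₀⟩ :=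
            ext_lemma col acol richC hσ hα hσ₀ hα₀ hc₀.symm τz hτzinj
          have hsnd : FSnd q.1 (Form.set l) (conf acol τ₀ α₀) := by
            rw [hτ₀α₀]
            exact (FSnd_correct q.1 (Form.set l) M col rich τz α hτzinj hα
              (comps 0) _ h).mp hyz.symm
          have hPiφ := hPi σ₀ α₀ hσ₀ hα₀ hc₀ q.1 τ₀ hτ₀inj hsnd
          have hcc : conf acol σ₀ τ₀ = conf col σ τz := conf_flip hτ₀σ₀
          rw [hcc] at hPiφ
          have hrec := PiRel_correct (n + 1) j hj' M col rich φ q.1 σ τz hσ hτzinj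
            (fun i => comps i.succ) hyz.symm
          have hidx : comps (⟨j, hj'⟩ : Fin (n + 1)).succ =
            comps ⟨j + 1, hj⟩ := _root_.rfl
          rw [hidx] at hrec
          exact hrec.mpr hPiφ
  termination_by ℓ

lemma rich_of_card {A : Type} [DecidableEq A] [Fintype A] (col : A → κ)
    (hcard : ∀ c : κ, 3 * k ≤ (Finset.univ.filter (fun a : A => col a = c)).card) :
    Rich k col := by
  intro c
  obtain ⟨U, hUsub, hUcard⟩ := Finset.exists_subset_card_eq (hcard c)
  refine ⟨fun i => (U.equivFin.symm (Fin.cast hUcard.symm i)).1, ?_, ?_⟩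
  · intro i j hij
    have := U.equivFin.symm.injective (Subtype.ext hij)
    simpa [Fin.ext_iff] using congrArg Fin.val this
  · intro i
    have hmem : ((U.equivFin.symm (Fin.cast hUcard.symm i)).1 : A) ∈ U :=
      (U.equivFin.symm _).2
    have := hUsub hmem
    rw [Finset.mem_filter] at this
    exact this.2

end CompRel

/-- Component-extraction relations: for every `j` there is a ternary relation `Pi j`
on forms and configurations such that `φ * σ` is the `j`-th component of the
`ℓ`-tuple `χ * α` iff `Pi j φ χ (conf σ α)` holds. -/
theorem component_relations {κ : Type} (k ℓ : ℕ) (hℓ : 0 < ℓ) :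
    ∃ Pi : Fin ℓ → (Form k κ → Form k κ → Config2 k κ → Prop),
      ∀ (A : Type) [DecidableEq A] [Fintype A],
        ∀ (M : HFModel A) (col : A → κ),
          (∀ c : κ, 3 * k ≤ (Finset.univ.filter (fun a : A => col a = c)).card) →
          ∀ (φ χ : Form k κ) (σ α : Fin k → A),
            Function.Injective σ → Function.Injective α →
            ∀ comps : Fin ℓ → M.Obj,
              evalForm M col α χ = tupleObj M ℓ comps →
              ∀ j : Fin ℓ,
                (comps j = evalForm M col σ φ ↔ Pi j φ χ (conf col σ α)) := by
  refine ⟨fun j φ χ c => CompRel.PiRel ℓ j.1 φ χ c, ?_⟩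
  intro A _ _ M col hcard φ χ σ α hσ hα comps h j
  have rich := CompRel.rich_of_card col hcard
  have hmain := CompRel.PiRel_correct ℓ j.1 j.2 M col rich φ χ σ α hσ hα comps h
  simpa using hmain
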